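/- arXiv:1806.09368 — 2 statements merged into one kernel-verified Lean document; each statement's English description precedes it below -/
import Mathlib

section
/- If a nonempty Π⁰₁ class of infinite binary sequences contains no computable member, then it is uncountable. -/
/-- Partial functions recursive in an oracle `O : ℕ → ℕ` (oracle partial recursion). -/
inductive OracleRecursiveIn (O : ℕ → ℕ) : (ℕ →. ℕ) → Prop
  | zero : OracleRecursiveIn O (pure 0)
  | succ : OracleRecursiveIn O Nat.succ
  | left : OracleRecursiveIn O ↑fun n : ℕ => n.unpair.1
  | right : OracleRecursiveIn O ↑fun n : ℕ => n.unpair.2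
  | oracle : OracleRecursiveIn O ↑O
  | pair {f g} : OracleRecursiveIn O f → OracleRecursiveIn O g →
      OracleRecursiveIn O fun n => Nat.pair <$> f n <*> g n
  | comp {f g} : OracleRecursiveIn O f → OracleRecursiveIn O g →
      OracleRecursiveIn O fun n => g n >>= f
  | prec {f g} : OracleRecursiveIn O f → OracleRecursiveIn O g →
      OracleRecursiveIn O (Nat.unpaired fun a n =>
        n.rec (f a) fun y IH => do let i ← IH; g (Nat.pair a (Nat.pair y i)))
  | rfind {f} : OracleRecursiveIn O f →
      OracleRecursiveIn O fun a => Nat.rfind fun n => (fun m => m = 0) <$> f (Nat.pair a n)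

/-- The oracle (characteristic function on `ℕ`) associated to a point of Cantor space. -/
def boolOracle (A : ℕ → Bool) : ℕ → ℕ := fun n => (A n).toNat

/-- Turing reducibility `A ≤ᵀ B` for points of Cantor space. -/
def TuringLE (A B : ℕ → Bool) : Prop :=
  OracleRecursiveIn (boolOracle B) fun n => Part.some ((A n).toNat)

/-- Strict Turing reducibility `A <ᵀ B`. -/
def TuringLT (A B : ℕ → Bool) : Prop :=
  TuringLE A B ∧ ¬ TuringLE B A

/-- `A` is computable iff it is reducible to the empty oracle. -/
def ComputableSet (A : ℕ → Bool) : Prop :=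
  TuringLE A fun _ => false

/-- `P` is a `Π⁰₁` class: the set of infinite paths through a computable,
downward-closed set of finite binary strings. -/
def IsPi01Class (P : Set (ℕ → Bool)) : Prop :=
  ∃ T : List Bool → Bool, Computable T ∧
    (∀ σ τ : List Bool, σ <+: τ → T τ = true → T σ = true) ∧
    ∀ A : ℕ → Bool, A ∈ P ↔ ∀ n : ℕ, T ((List.range n).map A) = true

namespace SP01Aux

abbrev istr (A : ℕ → Bool) (k : ℕ) : List Bool := (List.range k).map A

lemma istr_length (A : ℕ → Bool) (k : ℕ) : (istr A k).length = k := by simp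

lemma istr_succ (A : ℕ → Bool) (k : ℕ) : istr A (k+1) = istr A k ++ [A k] := by
  show (List.range (k+1)).map A = _
  rw [List.range_succ, List.map_append]
  rfl

/-- weak König lemma for binary trees -/
lemma koenig (S : List Bool → Prop) (hpc : ∀ σ τ : List Bool, σ <+: τ → S τ → S σ)
    (h : ∀ m : ℕ, ∃ τ, S τ ∧ m ≤ τ.length) :
    ∃ B : ℕ → Bool, ∀ k, S (istr B k) := by
  classical
  set good : List Bool → Prop := fun σ => ∀ m : ℕ, ∃ τ, S τ ∧ σ <+: τ ∧ m ≤ τ.length with hgood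
  have h0 : good [] := fun m => by
    obtain ⟨τ, h1, h2⟩ := h m; exact ⟨τ, h1, List.nil_prefix, h2⟩
  have hstep : ∀ σ, good σ → ∃ b, good (σ ++ [b]) := by
    intro σ hσ
    by_contra hc
    push_neg at hc
    have hc' : ∀ b : Bool, ∃ mb : ℕ, ∀ τ, S τ → σ ++ [b] <+: τ → τ.length < mb := by
      intro b
      by_contra h'
      apply hc b
      push_neg at h'
      intro m
      obtain ⟨τ, h1, h2, h3⟩ := h' m
      exact ⟨τ, h1, h2, h3⟩
    obtain ⟨m0, hm0⟩ := hc' false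
    obtain ⟨m1, hm1⟩ := hc' true
    obtain ⟨τ, hS, hpre, hlen⟩ := hσ (max m0 m1 + σ.length + 1)
    -- τ properly extends σ
    have hlt : σ.length < τ.length := by omega
    obtain ⟨ρ, rfl⟩ := hpre
    have hρ : ρ ≠ [] := by
      intro h; subst h; simp at hlt
    obtain ⟨b, ρ', rfl⟩ := List.exists_cons_of_ne_nil hρ
    have hpre2 : σ ++ [b] <+: σ ++ b :: ρ' := by
      refine ⟨ρ', by simp⟩
    cases b
    · exact absurd (hm0 _ hS hpre2) (by omega)
    · exact absurd (hm1 _ hS hpre2) (by omega)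
  -- build the chain
  let F : ℕ → {σ : List Bool // good σ} := fun k =>
    Nat.rec ⟨[], h0⟩ (fun _ IH => ⟨IH.1 ++ [Classical.choose (hstep IH.1 IH.2)],
      Classical.choose_spec (hstep IH.1 IH.2)⟩) k
  have hFs : ∀ k, (F (k+1)).1 = (F k).1 ++ [Classical.choose (hstep (F k).1 (F k).2)] :=
    fun k => rfl
  have hFlen : ∀ k, (F k).1.length = k := by
    intro k; induction k with
    | zero => rfl
    | succ k ih => rw [hFs]; simp [ih]
  set B : ℕ → Bool := fun i => (F (i+1)).1.getD i false with hB
  have hIstr : ∀ k, istr B k = (F k).1 := by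
    intro k; induction k with
    | zero => rfl
    | succ k ih =>
      have hBk : B k = Classical.choose (hstep (F k).1 (F k).2) := by
        show (F (k+1)).1.getD k false = _
        rw [hFs, List.getD_eq_getElem _ _ (by simp [hFlen])]
        rw [List.getElem_append_right (by simp [hFlen])]
        simp [hFlen]
      rw [istr_succ, ih, hFs, hBk]
  refine ⟨B, fun k => ?_⟩
  rw [hIstr]
  obtain ⟨τ, h1, h2, _⟩ := (F k).2 0
  exact hpc _ _ h2 h1


lemma istr_prefix (A : ℕ → Bool) {k m : ℕ} (h : k ≤ m) : istr A k <+: istr A m := by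
  have : istr A k = (istr A m).take k := by
    rw [← List.map_take, List.take_range, Nat.min_eq_left h]
  rw [this]; exact List.take_prefix _ _

lemma istr_getD (A : ℕ → Bool) {j k : ℕ} (h : j < k) : (istr A k).getD j false = A j := by
  rw [List.getD_eq_getElem _ _ (by simpa using h)]
  simp

lemma prefix_getD {σ τ : List Bool} (h : σ <+: τ) {j : ℕ} (hj : j < σ.length) :
    σ.getD j false = τ.getD j false := by
  rw [List.getD_eq_getElem _ _ hj, List.getD_eq_getElem _ _ (lt_of_lt_of_le hj h.length_le)]
  exact h.getElem hj

lemma istr_eq_of_getD {A : ℕ → Bool} {σ : List Bool} {k : ℕ} (hk : σ.length = k)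
    (h : ∀ i, i < k → σ.getD i false = A i) : σ = istr A k := by
  apply List.ext_getElem (by simp [hk])
  intro i h1 h2
  have := h i (by omega)
  rw [List.getD_eq_getElem _ _ h1] at this
  simpa using this

/-- a countable set of paths through a tree has an isolated member -/
lemma exists_isolated (T : List Bool → Bool)
    (hdc : ∀ σ τ : List Bool, σ <+: τ → T τ = true → T σ = true)
    (P : Set (ℕ → Bool)) (hmem : ∀ A : ℕ → Bool, A ∈ P ↔ ∀ k, T (istr A k) = true)
    (hne : P.Nonempty) (hcnt : P.Countable) :
    ∃ A ∈ P, ∃ n : ℕ, ∀ B ∈ P, istr B n = istr A n → B = A := by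
  classical
  by_contra hiso
  push_neg at hiso
  -- surjection onto P
  obtain ⟨u, hu⟩ := (Set.countable_iff_exists_surjective hne).1 hcnt
  -- alive strings
  set alive : List Bool → Prop := fun σ => ∃ C ∈ P, istr C σ.length = σ with halive
  have h0 : alive [] := by
    obtain ⟨C, hC⟩ := hne
    exact ⟨C, hC, rfl⟩
  have hstep : ∀ σ, alive σ → ∀ x : ℕ → Bool,
      ∃ σ', σ <+: σ' ∧ σ.length < σ'.length ∧ alive σ' ∧
        (∀ C, istr C σ'.length = σ' → C ≠ x) := by
    intro σ hσ x
    obtain ⟨C, hCP, hCσ⟩ := hσ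
    have key : ∀ D : ℕ → Bool, D ∈ P → istr D σ.length = σ → D ≠ x →
        ∃ σ', σ <+: σ' ∧ σ.length < σ'.length ∧ alive σ' ∧
          (∀ E, istr E σ'.length = σ' → E ≠ x) := by
      intro D hDP hDσ hDx
      obtain ⟨i, hi⟩ : ∃ i, D i ≠ x i := by
        by_contra hc; push_neg at hc; exact hDx (funext hc)
      set L := max (σ.length + 1) (i + 1) with hL
      refine ⟨istr D L, ?_, ?_, ⟨D, hDP, by simp⟩, ?_⟩
      · rw [← hDσ]; exact istr_prefix D (by omega)
      · simp; omega
      · intro E hE hEx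
        subst hEx
        apply hi
        have hE' : istr E L = istr D L := by simpa using hE
        have h1 : (istr E L).getD i false = (istr D L).getD i false := by rw [hE']
        rw [istr_getD _ (by omega), istr_getD _ (by omega)] at h1
        exact h1.symm
    by_cases hCx : C = x
    · -- x = C ∈ P, use non-isolation of x
      subst hCx
      obtain ⟨B, hBP, hBσ, hBx⟩ := hiso C hCP σ.length
      exact key B hBP (by rw [hBσ, hCσ]) hBx
    · exact key C hCP hCσ hCx
  -- build the chain
  let F : ℕ → {σ : List Bool // alive σ} := fun k =>
    Nat.rec ⟨[], h0⟩ (fun k IH =>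
      ⟨Classical.choose (hstep IH.1 IH.2 (u k)),
        ((Classical.choose_spec (hstep IH.1 IH.2 (u k))).2.2.1)⟩) k
  have hFs : ∀ k, (F k).1 <+: (F (k+1)).1 ∧ (F k).1.length < (F (k+1)).1.length ∧
      (∀ C, istr C (F (k+1)).1.length = (F (k+1)).1 → C ≠ u k) := by
    intro k
    have h := Classical.choose_spec (hstep (F k).1 (F k).2 (u k))
    exact ⟨h.1, h.2.1, h.2.2.2⟩
  have hFmono : ∀ k m, k ≤ m → (F k).1 <+: (F m).1 := by
    intro k m h
    induction m with
    | zero => obtain rfl := Nat.le_zero.1 h; exact List.prefix_refl _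
    | succ m ih =>
      rcases Nat.lt_or_ge k (m+1) with h' | h'
      · exact (ih (by omega)).trans (hFs m).1
      · rw [Nat.le_antisymm h h']
  have hFlen : ∀ k, k ≤ (F k).1.length := by
    intro k; induction k with
    | zero => simp
    | succ k ih => have := (hFs k).2.1; omega
  -- the limit path
  set D : ℕ → Bool := fun i => (F (i+1)).1.getD i false with hD
  have hDF : ∀ k, istr D ((F k).1.length) = (F k).1 := by
    intro k
    refine (istr_eq_of_getD rfl ?_).symm
    intro i hi
    show (F k).1.getD i false = (F (i+1)).1.getD i false
    have hcomp : (F (k)).1 <+: (F (i+1)).1 ∨ (F (i+1)).1 <+: (F k).1 := by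
      rcases Nat.le_total k (i+1) with h | h
      · exact Or.inl (hFmono _ _ h)
      · exact Or.inr (hFmono _ _ h)
    have hilen : i < (F (i+1)).1.length := lt_of_lt_of_le (by omega) (hFlen (i+1))
    rcases hcomp with h | h
    · exact prefix_getD h hi
    · exact (prefix_getD h hilen).symm
  have hDP : D ∈ P := by
    rw [hmem]
    intro k
    obtain ⟨C, hCP, hC⟩ := (F k).2
    have h1 : istr D k <+: istr D ((F k).1.length) := istr_prefix D (hFlen k)
    rw [hDF k, ← hC] at h1
    exact hdc _ _ h1 ((hmem C).1 hCP _)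
  obtain ⟨k0, hk0⟩ := hu ⟨D, hDP⟩
  exact ((hFs k0).2.2 D (hDF (k0+1))) (by rw [hk0])


lemma prefix_comparable {σ ρ τ : List Bool} (h1 : σ <+: τ) (h2 : ρ <+: τ) :
    σ <+: ρ ∨ ρ <+: σ := by
  rcases Nat.le_total σ.length ρ.length with h | h
  · left
    rw [List.prefix_iff_eq_take.mp h1, List.prefix_iff_eq_take.mp h2]
    exact (List.take_isPrefix_take).2 (Or.inl h)
  · right
    rw [List.prefix_iff_eq_take.mp h1, List.prefix_iff_eq_take.mp h2]
    exact (List.take_isPrefix_take).2 (Or.inl h)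

lemma key_lemma (T : List Bool → Bool)
    (hdc : ∀ σ τ : List Bool, σ <+: τ → T τ = true → T σ = true)
    (P : Set (ℕ → Bool)) (hmem : ∀ A : ℕ → Bool, A ∈ P ↔ ∀ k, T (istr A k) = true)
    (A : ℕ → Bool) (hA : A ∈ P) (n : ℕ)
    (hiso : ∀ B ∈ P, istr B n = istr A n → B = A) (j : ℕ) :
    ∃ K, j < K ∧ n ≤ K ∧ ∀ τ : List Bool, τ.length = K → istr A n <+: τ → T τ = true →
      τ.getD j false = A j := by
  by_contra hc
  push_neg at hc
  set S : List Bool → Prop := fun σ => T σ = true ∧ (σ <+: istr A n ∨ istr A n <+: σ) ∧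
    (j < σ.length → σ.getD j false ≠ A j) with hS
  have hpc : ∀ σ τ : List Bool, σ <+: τ → S τ → S σ := by
    rintro σ τ hpre ⟨h1, h2, h3⟩
    refine ⟨hdc _ _ hpre h1, ?_, ?_⟩
    · rcases h2 with h2 | h2
      · exact Or.inl (hpre.trans h2)
      · rcases prefix_comparable hpre h2 with h | h
        · exact Or.inl h
        · exact Or.inr h
    · intro hj
      rw [prefix_getD hpre hj]
      exact h3 (lt_of_lt_of_le hj hpre.length_le)
  have harb : ∀ m : ℕ, ∃ τ, S τ ∧ m ≤ τ.length := by
    intro m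
    set K := max (max j n) m + 1 with hK
    obtain ⟨τ, hlen, hpre, hT, hbit⟩ := hc K (by omega) (by omega)
    exact ⟨τ, ⟨hT, Or.inr hpre, fun _ => hbit⟩, by omega⟩
  obtain ⟨B, hB⟩ := koenig S hpc harb
  have hBP : B ∈ P := (hmem B).2 fun k => (hB k).1
  have hBA : B = A := by
    apply hiso B hBP
    rcases (hB n).2.1 with h | h
    · exact h.eq_of_length (by simp)
    · exact (h.eq_of_length (by simp)).symm
  have := (hB (j+1)).2.2 (by simp)
  rw [istr_getD _ (by omega), hBA] at this
  exact this rfl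


def allL : ℕ → List (List Bool) := fun K =>
  Nat.rec [[]] (fun _ IH => IH.flatMap (fun σ => [σ ++ [false], σ ++ [true]])) K

lemma allL_computable : Computable allL := by
  have hg : Primrec (fun σ : List Bool => [σ ++ [false], σ ++ [true]]) := by
    have h1 : Primrec (fun σ : List Bool => σ ++ [false]) :=
      Primrec.list_concat.comp .id (.const false)
    have h2 : Primrec (fun σ : List Bool => σ ++ [true]) :=
      Primrec.list_concat.comp .id (.const true)
    exact Primrec.list_cons.comp h1 (Primrec.list_cons.comp h2 (.const []))
  have hh : Computable₂ (fun (_ : ℕ) (p : ℕ × List (List Bool)) =>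
      p.2.flatMap (fun σ => [σ ++ [false], σ ++ [true]])) := by
    have : Primrec (fun p : ℕ × (ℕ × List (List Bool)) =>
        (p.2.2).flatMap (fun σ => [σ ++ [false], σ ++ [true]])) :=
      Primrec.list_flatMap (Primrec.snd.comp Primrec.snd) (hg.comp Primrec.snd).to₂
    exact this.to_comp
  exact (Computable.nat_rec Computable.id (Computable.const [[]]) hh).of_eq (fun K => rfl)

lemma mem_allL : ∀ {K : ℕ} {τ : List Bool}, τ ∈ allL K ↔ τ.length = K := by
  intro K
  induction K with
  | zero =>
    intro τ
    show τ ∈ [[]] ↔ _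
    simp [List.length_eq_zero_iff]
  | succ K ih =>
    intro τ
    show τ ∈ (allL K).flatMap _ ↔ _
    rw [List.mem_flatMap]
    constructor
    · rintro ⟨σ, hσ, hτ⟩
      have hlen := ih.1 hσ
      simp only [List.mem_cons, List.mem_singleton] at hτ
      rcases hτ with rfl | hτ
      · simp [hlen]
      · simp at hτ
        subst hτ
        simp [hlen]
    · intro hlen
      have hne : τ ≠ [] := by intro h; subst h; simp at hlen
      refine ⟨τ.dropLast, ih.2 (by simp [hlen]), ?_⟩
      have hsp : τ.dropLast ++ [τ.getLast hne] = τ := List.dropLast_append_getLast hne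
      cases hb : τ.getLast hne
      · rw [hb] at hsp
        exact List.mem_cons.2 (Or.inl hsp.symm)
      · rw [hb] at hsp
        exact List.mem_cons.2 (Or.inr (List.mem_cons.2 (Or.inl hsp.symm)))

lemma computable_listAll {α β : Type} [Primcodable α] [Primcodable β] (d : β)
    {p : α → β → Bool} (hp : Computable₂ p) :
    Computable₂ fun (a : α) (L : List β) => L.all (p a) := by
  have hand : Computable₂ (fun a b : Bool => a && b) := (Primrec.dom_bool₂ _).to_comp
  have hor : Computable₂ (fun a b : Bool => a || b) := (Primrec.dom_bool₂ _).to_comp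
  have hle : Computable₂ (fun a b : ℕ => decide (a ≤ b)) := Primrec.nat_le.decide.to_comp
  have hgetD : Computable₂ (fun (l : List β) (n : ℕ) => l.getD n d) :=
    (Primrec.list_getD d).to_comp
  have hstep : Computable₂ (fun (x : α × List β) (y : ℕ × Bool) =>
      y.2 && (decide (x.2.length ≤ y.1) || p x.1 (x.2.getD y.1 d))) :=
    hand.comp (Computable.snd.comp Computable.snd)
      (hor.comp
        (hle.comp (Computable.list_length.comp (Computable.snd.comp Computable.fst))
          (Computable.fst.comp Computable.snd))
        (hp.comp (Computable.fst.comp Computable.fst)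
          (hgetD.comp (Computable.snd.comp Computable.fst)
            (Computable.fst.comp Computable.snd))))
  have hmain := Computable.nat_rec
    (f := fun x : α × List β => x.2.length) (g := fun _ => true)
    (h := fun (x : α × List β) (y : ℕ × Bool) =>
      y.2 && (decide (x.2.length ≤ y.1) || p x.1 (x.2.getD y.1 d)))
    (Computable.list_length.comp Computable.snd) (Computable.const true) hstep
  refine hmain.of_eq ?_
  rintro ⟨a, L⟩
  simp only
  suffices h : ∀ m : ℕ, (Nat.rec (motive := fun _ => Bool) true
      (fun y IH => IH && (decide (L.length ≤ y) || p a (L.getD y d))) m)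
      = (L.take m).all (p a) by
    rw [h L.length, List.take_length]
  intro m
  induction m with
  | zero => simp
  | succ m ih =>
    show ((Nat.rec (motive := fun _ => Bool) true
      (fun y IH => IH && (decide (L.length ≤ y) || p a (L.getD y d))) m)
      && (decide (L.length ≤ m) || p a (L.getD m d))) = (L.take (m+1)).all (p a)
    rw [List.take_succ, List.all_append, ih]
    congr 1
    rcases Nat.lt_or_ge m L.length with h | h
    · simp [List.getElem?_eq_getElem h, List.getD_eq_getElem _ _ h, Nat.not_le.2 h]
    · simp [List.getElem?_eq_none h, h]

lemma computable_listAny {α β : Type} [Primcodable α] [Primcodable β] (d : β)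
    {p : α → β → Bool} (hp : Computable₂ p) :
    Computable₂ fun (a : α) (L : List β) => L.any (p a) := by
  have hnot : Computable (fun b : Bool => !b) := (Primrec.dom_bool _).to_comp
  have h1 : Computable₂ fun (a : α) (b : β) => !(p a b) := hnot.comp hp
  have h2 := computable_listAll d h1
  have h3 : Computable₂ fun (a : α) (L : List β) => !(L.all fun b => !(p a b)) :=
    hnot.comp h2
  refine h3.of_eq ?_
  rintro ⟨a, L⟩
  simp only
  induction L with
  | nil => simp
  | cons b L ih => simp [List.any_cons, List.all_cons, ← ih]


def preF (n : ℕ) (σ₀ : List Bool) : List Bool → Bool := fun τ =>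
  decide (n ≤ τ.length) && (List.range n).all (fun i => τ.getD i false == σ₀.getD i false)

def WF (T : List Bool → Bool) (n : ℕ) (σ₀ : List Bool) : List Bool → Bool := fun τ =>
  preF n σ₀ τ && T τ

def okbF (T : List Bool → Bool) (n : ℕ) (σ₀ : List Bool) : ℕ → ℕ → Bool := fun j K =>
  (decide (j < K) && decide (n ≤ K)) &&
    ((allL K).any (fun τ => WF T n σ₀ τ) &&
      (((allL K).all fun τ => (!(WF T n σ₀ τ) || τ.getD j false)) ||
       ((allL K).all fun τ => (!(WF T n σ₀ τ) || !(τ.getD j false)))))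

def bitbF (T : List Bool → Bool) (n : ℕ) (σ₀ : List Bool) : ℕ → ℕ → Bool := fun j K =>
  (allL K).any fun τ => WF T n σ₀ τ && τ.getD j false

variable {T : List Bool → Bool} {n : ℕ}

lemma preF_iff {A : ℕ → Bool} (τ : List Bool) :
    preF n (istr A n) τ = true ↔ istr A n <+: τ := by
  rw [preF]
  simp only [Bool.and_eq_true, decide_eq_true_eq, List.all_eq_true, List.mem_range, beq_iff_eq]
  constructor
  · rintro ⟨h1, h2⟩
    have hlen1 : (τ.take n).length = n := by
      rw [List.length_take]; omega
    have heq : τ.take n = istr A n := by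
      refine istr_eq_of_getD hlen1 (fun i hi => ?_)
      have e1 : (τ.take n).getD i false = τ.getD i false :=
        prefix_getD (List.take_prefix n τ) (by rw [hlen1]; exact hi)
      have e2 := h2 i hi
      rw [e1, e2, istr_getD A hi]
    rw [List.prefix_iff_eq_take, istr_length]
    exact heq.symm
  · intro h
    refine ⟨by simpa using h.length_le, fun i hi => ?_⟩
    exact (prefix_getD h (by simpa using hi)).symm

lemma WF_iff {A : ℕ → Bool} (τ : List Bool) :
    WF T n (istr A n) τ = true ↔ (istr A n <+: τ ∧ T τ = true) := by
  rw [WF, Bool.and_eq_true, preF_iff]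

section computability

lemma preF_computable (hT : Computable T) (σ₀ : List Bool) : Computable (WF T n σ₀) := by
  have hand : Computable₂ (fun a b : Bool => a && b) := (Primrec.dom_bool₂ _).to_comp
  have hle : Computable₂ (fun a b : ℕ => decide (a ≤ b)) := Primrec.nat_le.decide.to_comp
  have hbeq : Computable₂ (fun a b : Bool => a == b) := Primrec.beq.to_comp
  have hgetD : Computable₂ (fun (l : List Bool) (i : ℕ) => l.getD i false) :=
    (Primrec.list_getD false).to_comp
  have hp : Computable₂ (fun (τ : List Bool) (i : ℕ) => τ.getD i false == σ₀.getD i false) :=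
    hbeq.comp (hgetD.comp Computable.fst Computable.snd)
      (hgetD.comp (Computable.const σ₀) Computable.snd)
  have hall := computable_listAll (0 : ℕ) hp
  have hpre : Computable (preF n σ₀) :=
    hand.comp (hle.comp (Computable.const n) Computable.list_length)
      (hall.comp Computable.id (Computable.const (List.range n)))
  exact hand.comp hpre hT

lemma okbF_computable (hT : Computable T) (σ₀ : List Bool) : Computable₂ (okbF T n σ₀) := by
  have hand : Computable₂ (fun a b : Bool => a && b) := (Primrec.dom_bool₂ _).to_comp
  have hor : Computable₂ (fun a b : Bool => a || b) := (Primrec.dom_bool₂ _).to_comp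
  have hnot : Computable (fun b : Bool => !b) := (Primrec.dom_bool _).to_comp
  have hle : Computable₂ (fun a b : ℕ => decide (a ≤ b)) := Primrec.nat_le.decide.to_comp
  have hlt : Computable₂ (fun a b : ℕ => decide (a < b)) := Primrec.nat_lt.decide.to_comp
  have hgetD : Computable₂ (fun (l : List Bool) (i : ℕ) => l.getD i false) :=
    (Primrec.list_getD false).to_comp
  have hW : Computable (WF T n σ₀) := preF_computable hT σ₀
  have hp1 : Computable₂ (fun (j : ℕ) (τ : List Bool) => (!(WF T n σ₀ τ) || τ.getD j false)) :=
    hor.comp (hnot.comp (hW.comp Computable.snd))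
      (hgetD.comp Computable.snd Computable.fst)
  have hp2 : Computable₂ (fun (j : ℕ) (τ : List Bool) => (!(WF T n σ₀ τ) || !(τ.getD j false))) :=
    hor.comp (hnot.comp (hW.comp Computable.snd))
      (hnot.comp (hgetD.comp Computable.snd Computable.fst))
  have hpW : Computable₂ (fun (_ : ℕ) (τ : List Bool) => WF T n σ₀ τ) :=
    hW.comp Computable.snd
  have hall1 := computable_listAll ([] : List Bool) hp1
  have hall2 := computable_listAll ([] : List Bool) hp2
  have hanyW := computable_listAny ([] : List Bool) hpW
  have hallK : Computable (fun x : ℕ × ℕ => allL x.2) := allL_computable.comp Computable.snd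
  exact hand.comp
    (hand.comp (hlt.comp Computable.fst Computable.snd)
      (hle.comp (Computable.const n) Computable.snd))
    (hand.comp (hanyW.comp Computable.fst hallK)
      (hor.comp (hall1.comp Computable.fst hallK) (hall2.comp Computable.fst hallK)))

lemma bitbF_computable (hT : Computable T) (σ₀ : List Bool) : Computable₂ (bitbF T n σ₀) := by
  have hand : Computable₂ (fun a b : Bool => a && b) := (Primrec.dom_bool₂ _).to_comp
  have hgetD : Computable₂ (fun (l : List Bool) (i : ℕ) => l.getD i false) :=
    (Primrec.list_getD false).to_comp
  have hW : Computable (WF T n σ₀) := preF_computable hT σ₀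
  have hp : Computable₂ (fun (j : ℕ) (τ : List Bool) => WF T n σ₀ τ && τ.getD j false) :=
    hand.comp (hW.comp Computable.snd) (hgetD.comp Computable.snd Computable.fst)
  have hany := computable_listAny ([] : List Bool) hp
  exact hany.comp Computable.fst (allL_computable.comp Computable.snd)

end computability

lemma isolated_computable (hT : Computable T)
    (A : ℕ → Bool) (hA : ∀ k, T (istr A k) = true)
    (hkey : ∀ j : ℕ, ∃ K, j < K ∧ n ≤ K ∧ ∀ τ : List Bool, τ.length = K →
      istr A n <+: τ → T τ = true → τ.getD j false = A j) :
    Computable A := by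
  classical
  set σ₀ : List Bool := istr A n with hσ₀
  have hwitW : ∀ K, n ≤ K → WF T n σ₀ (istr A K) = true := by
    intro K hn
    exact (WF_iff _).2 ⟨istr_prefix A hn, hA K⟩
  have hok_ex : ∀ j, ∃ K, okbF T n σ₀ j K = true := by
    intro j
    obtain ⟨K, hj, hn, hprop⟩ := hkey j
    refine ⟨K, ?_⟩
    have hbits : ∀ τ ∈ allL K, WF T n σ₀ τ = true → τ.getD j false = A j := by
      intro τ hm hWτ
      obtain ⟨hp, hTτ⟩ := (WF_iff τ).1 hWτ
      exact hprop τ (mem_allL.1 hm) hp hTτ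
    rw [okbF]
    simp only [Bool.and_eq_true, decide_eq_true_eq]
    refine ⟨⟨hj, hn⟩, ?_, ?_⟩
    · rw [List.any_eq_true]
      exact ⟨istr A K, mem_allL.2 (istr_length A K), hwitW K hn⟩
    · rw [Bool.or_eq_true]
      cases hAj : A j
      · right
        rw [List.all_eq_true]
        intro τ hm
        cases hw : WF T n σ₀ τ
        · simp
        · have hb := hbits τ hm hw
          rw [hb, hAj]
          rfl
      · left
        rw [List.all_eq_true]
        intro τ hm
        cases hw : WF T n σ₀ τ
        · simp
        · have hb := hbits τ hm hw
          rw [hb, hAj]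
          rfl
  have hok_bit : ∀ j K, okbF T n σ₀ j K = true → bitbF T n σ₀ j K = A j := by
    intro j K hok
    rw [okbF] at hok
    simp only [Bool.and_eq_true, decide_eq_true_eq, Bool.or_eq_true] at hok
    obtain ⟨⟨hj, hn⟩, _, hagree⟩ := hok
    have hwmem : istr A K ∈ allL K := mem_allL.2 (istr_length A K)
    have hwit := hwitW K hn
    have hwbit : (istr A K).getD j false = A j := istr_getD A hj
    cases hAj : A j
    · have hall2 : ∀ τ ∈ allL K, (!(WF T n σ₀ τ) || !(τ.getD j false)) = true := by
        rcases hagree with h | h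
        · exfalso
          have := (List.all_eq_true.1 h) _ hwmem
          rw [hwit, hwbit, hAj] at this
          simp at this
        · exact List.all_eq_true.1 h
      rw [bitbF]
      rw [List.any_eq_false]
      intro τ hm
      have h2 := hall2 τ hm
      revert h2
      show (!(WF T n σ₀ τ) || !(τ.getD j false)) = true → ¬ (WF T n σ₀ τ && τ.getD j false) = true
      generalize WF T n σ₀ τ = a
      generalize τ.getD j false = b
      cases a <;> cases b <;> decide
    · rw [bitbF, List.any_eq_true]
      refine ⟨istr A K, hwmem, ?_⟩
      rw [hwit, hwbit, hAj]
      rfl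
  -- now put together the partial recursive search
  have hokc : Computable₂ (okbF T n σ₀) := okbF_computable hT σ₀
  have hbitc : Computable₂ (bitbF T n σ₀) := bitbF_computable hT σ₀
  have hrf : Partrec fun j : ℕ =>
      (Nat.rfind fun K => (Part.some (okbF T n σ₀ j K) : Part Bool)).map
        (fun K => bitbF T n σ₀ j K) :=
    (Partrec.rfind hokc.partrec₂).map hbitc
  refine hrf.of_eq_tot fun j => ?_
  obtain ⟨K, hK⟩ := hok_ex j
  have hdom : (Nat.rfind fun K => (Part.some (okbF T n σ₀ j K) : Part Bool)).Dom :=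
    Nat.rfind_dom.2 ⟨K, by simp [hK], fun {m} _ => trivial⟩
  have hmem0 : (Nat.rfind fun K => (Part.some (okbF T n σ₀ j K) : Part Bool)).get hdom ∈
      Nat.rfind fun K => (Part.some (okbF T n σ₀ j K) : Part Bool) := Part.get_mem hdom
  have hok0 : okbF T n σ₀ j ((Nat.rfind fun K => (Part.some (okbF T n σ₀ j K) : Part Bool)).get
      hdom) = true := by
    have := Nat.rfind_spec hmem0
    simpa using this
  rw [Part.mem_map_iff]
  exact ⟨_, hmem0, hok_bit j _ hok0⟩

end SP01Aux


/-- A nonempty `Π⁰₁` class with no computable member is uncountable. -/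
theorem special_Pi01_class_uncountable (P : Set (ℕ → Bool))
    (hP : IsPi01Class P) (hne : P.Nonempty)
    (hnc : ∀ A ∈ P, ¬ Computable A) : ¬ P.Countable := by
  intro hcnt
  obtain ⟨T, hTc, hdc, hmem⟩ := hP
  have hmem' : ∀ A : ℕ → Bool, A ∈ P ↔ ∀ k, T (SP01Aux.istr A k) = true := hmem
  obtain ⟨A, hAP, n, hiso⟩ := SP01Aux.exists_isolated T hdc P hmem' hne hcnt
  have hkey := fun j => SP01Aux.key_lemma T hdc P hmem' A hAP n hiso j
  have hAc : Computable A :=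
    SP01Aux.isolated_computable hTc A (fun k => (hmem' A).1 hAP k) hkey
  exact hnc A hAP hAc
end

section
/- Every nonempty Π⁰₁ class contains a member of hyperimmune-free degree: if P is a nonempty Π⁰₁ class of infinite binary sequences, then there exists A ∈ P such that for every total function f : ℕ → ℕ with f ≤_T A, there is a computable function g : ℕ → ℕ with g(n) ≥ f(n) for all n. -/
namespace HIF


/-- Oracle machine codes. -/
inductive Codeo : Type
  | zero | succ | left | right | oracle
  | pair : Codeo → Codeo → Codeo
  | comp : Codeo → Codeo → Codeo
  | prec : Codeo → Codeo → Codeo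
  | rfind : Codeo → Codeo

/-- Evaluation of an oracle code relative to a (partial) oracle. -/
def evalo (O : ℕ →. ℕ) : Codeo → ℕ →. ℕ
  | .zero => pure 0
  | .succ => Nat.succ
  | .left => ↑fun n : ℕ => n.unpair.1
  | .right => ↑fun n : ℕ => n.unpair.2
  | .oracle => O
  | .pair cf cg => fun n => Nat.pair <$> evalo O cf n <*> evalo O cg n
  | .comp cf cg => fun n => evalo O cg n >>= evalo O cf
  | .prec cf cg =>
      Nat.unpaired fun a n =>
        n.rec (evalo O cf a) fun y IH => do let i ← IH; evalo O cg (Nat.pair a (Nat.pair y i))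
  | .rfind cf => fun a => Nat.rfind fun n => (fun m => m = 0) <$> evalo O cf (Nat.pair a n)

theorem exists_codeo {O : ℕ → ℕ} {f : ℕ →. ℕ} (h : OracleRecursiveIn O f) :
    ∃ c : Codeo, evalo ↑O c = f := by
  induction h with
  | zero => exact ⟨.zero, rfl⟩
  | succ => exact ⟨.succ, rfl⟩
  | left => exact ⟨.left, rfl⟩
  | right => exact ⟨.right, rfl⟩
  | oracle => exact ⟨.oracle, rfl⟩
  | pair _ _ hf hg =>
    rcases hf with ⟨cf, rfl⟩; rcases hg with ⟨cg, rfl⟩; exact ⟨.pair cf cg, rfl⟩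
  | comp _ _ hf hg =>
    rcases hf with ⟨cf, rfl⟩; rcases hg with ⟨cg, rfl⟩; exact ⟨.comp cf cg, rfl⟩
  | prec _ _ hf hg =>
    rcases hf with ⟨cf, rfl⟩; rcases hg with ⟨cg, rfl⟩; exact ⟨.prec cf cg, rfl⟩
  | rfind _ hf =>
    rcases hf with ⟨cf, rfl⟩; exact ⟨.rfind cf, rfl⟩

/-- Encoding of oracle codes. -/
def encC : Codeo → ℕ
  | .zero => 0
  | .succ => 1
  | .left => 2
  | .right => 3
  | .oracle => 4
  | .pair f g => 4 * Nat.pair (encC f) (encC g) + 5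
  | .comp f g => 4 * Nat.pair (encC f) (encC g) + 6
  | .prec f g => 4 * Nat.pair (encC f) (encC g) + 7
  | .rfind f => 4 * Nat.pair (encC f) (encC f) + 8

/-- Decoding of oracle codes. -/
def decC : ℕ → Codeo
  | 0 => .zero
  | 1 => .succ
  | 2 => .left
  | 3 => .right
  | 4 => .oracle
  | n + 5 =>
    have h1 : (n / 4).unpair.1 < n + 5 :=
      lt_of_le_of_lt (le_trans (Nat.unpair_left_le _) (Nat.div_le_self _ _)) (by omega)
    have h2 : (n / 4).unpair.2 < n + 5 :=
      lt_of_le_of_lt (le_trans (Nat.unpair_right_le _) (Nat.div_le_self _ _)) (by omega)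
    match n % 4 with
    | 0 => .pair (decC (n / 4).unpair.1) (decC (n / 4).unpair.2)
    | 1 => .comp (decC (n / 4).unpair.1) (decC (n / 4).unpair.2)
    | 2 => .prec (decC (n / 4).unpair.1) (decC (n / 4).unpair.2)
    | _ => .rfind (decC (n / 4).unpair.1)

theorem decC_encC : ∀ c, decC (encC c) = c := by
  intro c
  induction c with
  | zero => simp [encC, decC]
  | succ => simp [encC, decC]
  | left => simp [encC, decC]
  | right => simp [encC, decC]
  | oracle => simp [encC, decC]
  | pair f g hf hg =>
    rw [show encC (.pair f g) = 4 * Nat.pair (encC f) (encC g) + 0 + 5 from by simp [encC], decC]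
    simp [Nat.mul_add_div, Nat.mul_add_mod, hf, hg]
  | comp f g hf hg =>
    rw [show encC (.comp f g) = 4 * Nat.pair (encC f) (encC g) + 1 + 5 from by simp [encC], decC]
    simp [Nat.mul_add_div, Nat.mul_add_mod, hf, hg]
  | prec f g hf hg =>
    rw [show encC (.prec f g) = 4 * Nat.pair (encC f) (encC g) + 2 + 5 from by simp [encC], decC]
    simp [Nat.mul_add_div, Nat.mul_add_mod, hf, hg]
  | rfind f hf =>
    rw [show encC (.rfind f) = 4 * Nat.pair (encC f) (encC f) + 3 + 5 from by simp [encC], decC]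
    simp [Nat.mul_add_div, Nat.mul_add_mod, hf]

/-! ### Part B: oracle monotonicity and use -/

theorem mem_pair_iff {x y : Part ℕ} {a : ℕ} :
    a ∈ (Nat.pair <$> x <*> y) ↔ ∃ u ∈ x, ∃ v ∈ y, a = Nat.pair u v := by
  simp [Seq.seq, Part.bind_eq_bind, Part.mem_bind_iff, Part.map_eq_map, Part.mem_map_iff, eq_comm]

theorem mem_rfb {f : ℕ →. ℕ} {x : ℕ} {b : Bool} :
    b ∈ ((fun m => decide (m = 0)) <$> f x : Part Bool) ↔ ∃ v ∈ f x, decide (v = 0) = b := by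
  simp [Part.map_eq_map, Part.mem_map_iff, eq_comm]

theorem evalo_prec_zero (O : ℕ →. ℕ) (cf cg : Codeo) (x : ℕ) :
    evalo O (.prec cf cg) (Nat.pair x 0) = evalo O cf x := by
  simp [evalo, Nat.unpaired]

theorem evalo_prec_succ (O : ℕ →. ℕ) (cf cg : Codeo) (x k : ℕ) :
    evalo O (.prec cf cg) (Nat.pair x (k + 1)) =
      (evalo O (.prec cf cg) (Nat.pair x k)).bind
        fun i => evalo O cg (Nat.pair x (Nat.pair k i)) := by
  simp only [evalo, Nat.unpaired, Nat.unpair_pair]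
  rfl

theorem evalo_mono {O₁ O₂ : ℕ →. ℕ} (h : ∀ q a, a ∈ O₁ q → a ∈ O₂ q) :
    ∀ c n a, a ∈ evalo O₁ c n → a ∈ evalo O₂ c n := by
  intro c
  induction c with
  | zero => exact fun n a => id
  | succ => exact fun n a => id
  | left => exact fun n a => id
  | right => exact fun n a => id
  | oracle => exact h
  | pair cf cg ihf ihg =>
    intro n a ha
    simp only [evalo] at ha ⊢
    rw [mem_pair_iff] at ha ⊢
    obtain ⟨u, hu, v, hv, rfl⟩ := ha
    exact ⟨u, ihf _ _ hu, v, ihg _ _ hv, rfl⟩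
  | comp cf cg ihf ihg =>
    intro n a ha
    simp only [evalo, Part.bind_eq_bind, Part.mem_bind_iff] at ha ⊢
    replace ha := Part.mem_bind_iff.1 ha
    refine Part.mem_bind_iff.2 ?_
    obtain ⟨u, hu, hau⟩ := ha
    exact ⟨u, ihg _ _ hu, ihf _ _ hau⟩
  | prec cf cg ihf ihg =>
    intro n a ha
    rw [← Nat.pair_unpair n] at ha ⊢
    generalize n.unpair.1 = x at ha ⊢
    generalize n.unpair.2 = k at ha ⊢
    induction k generalizing a with
    | zero =>
      rw [evalo_prec_zero] at ha ⊢
      exact ihf _ _ ha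
    | succ k ihk =>
      rw [evalo_prec_succ, Part.mem_bind_iff] at ha ⊢
      obtain ⟨i, hi, hai⟩ := ha
      exact ⟨i, ihk _ hi, ihg _ _ hai⟩
  | rfind cf ihf =>
    intro n a ha
    simp only [evalo] at ha ⊢
    erw [Nat.mem_rfind] at ha ⊢
    obtain ⟨h1, h2⟩ := ha
    constructor
    · rw [mem_rfb] at h1 ⊢
      obtain ⟨v, hv, hv0⟩ := h1
      exact ⟨v, ihf _ _ hv, hv0⟩
    · intro m hm
      have := h2 hm
      rw [mem_rfb] at this ⊢
      obtain ⟨v, hv, hv0⟩ := this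
      exact ⟨v, ihf _ _ hv, hv0⟩

/-- The finite-string oracle: answers queries inside `σ`, diverges outside. -/
def lu (σ : List Bool) : ℕ →. ℕ := fun q => Part.ofOption (σ.map Bool.toNat)[q]?

theorem mem_lu {σ : List Bool} {q a : ℕ} :
    a ∈ lu σ q ↔ ∃ b : Bool, σ[q]? = some b ∧ a = b.toNat := by
  simp only [lu, Part.mem_ofOption, List.getElem?_map, Option.mem_def]
  cases h : σ[q]? with
  | none => simp
  | some b => simp [eq_comm]

theorem lu_mono {σ τ : List Bool} (h : σ <+: τ) :
    ∀ q a, a ∈ lu σ q → a ∈ lu τ q := by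
  intro q a ha
  rw [mem_lu] at ha ⊢
  obtain ⟨b, hb, rfl⟩ := ha
  refine ⟨b, ?_, rfl⟩
  have hq : q < σ.length := List.getElem?_eq_some_iff.1 hb |>.1
  have hσ : σ[q] = b := by
    have := List.getElem?_eq_getElem hq
    rw [hb] at this; exact (Option.some_inj.1 this.symm)
  rw [List.getElem?_eq_getElem (lt_of_lt_of_le hq h.length_le)]
  rw [← h.getElem hq, hσ]

/-- The restriction of `A` to its first `m` values. -/
def res (A : ℕ → Bool) (m : ℕ) : List Bool := (List.range m).map A

theorem res_prefix {A : ℕ → Bool} {m m' : ℕ} (h : m ≤ m') : res A m <+: res A m' := by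
  have : List.range m = (List.range m').take m := by
    rw [List.take_range]; congr 1; omega
  rw [res, res, this]
  exact (List.take_prefix _ _).map _

theorem res_length {A : ℕ → Bool} {m : ℕ} : (res A m).length = m := by simp [res]

theorem mem_lu_res {A : ℕ → Bool} {m q a : ℕ} :
    a ∈ lu (res A m) q ↔ q < m ∧ a = (A q).toNat := by
  rw [mem_lu]
  constructor
  · rintro ⟨b, hb, rfl⟩
    have hq : q < m := by
      have := List.getElem?_eq_some_iff.1 hb |>.1
      simpa [res] using this
    refine ⟨hq, ?_⟩
    have : (res A m)[q]? = some (A q) := by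
      simp [res, List.getElem?_map, List.getElem?_range hq]
    rw [this] at hb
    simp_all
  · rintro ⟨hq, rfl⟩
    exact ⟨A q, by simp [res, List.getElem?_map, List.getElem?_range hq], rfl⟩

theorem lu_res_le_oracle {A : ℕ → Bool} {m : ℕ} :
    ∀ q a, a ∈ lu (res A m) q → a ∈ (↑(boolOracle A) : ℕ →. ℕ) q := by
  intro q a ha
  rw [mem_lu_res] at ha
  simp [ha.2, boolOracle, PFun.coe_val]

theorem evalo_use {A : ℕ → Bool} :
    ∀ c n a, a ∈ evalo ↑(boolOracle A) c n → ∃ m, a ∈ evalo (lu (res A m)) c n := by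
  intro c
  induction c with
  | zero => exact fun n a ha => ⟨0, ha⟩
  | succ => exact fun n a ha => ⟨0, ha⟩
  | left => exact fun n a ha => ⟨0, ha⟩
  | right => exact fun n a ha => ⟨0, ha⟩
  | oracle =>
    intro n a ha
    refine ⟨n + 1, ?_⟩
    have : a = (A n).toNat := by
      simpa [evalo, PFun.coe_val, Part.mem_some_iff, boolOracle] using ha
    show a ∈ lu (res A (n + 1)) n
    rw [mem_lu_res]
    exact ⟨Nat.lt_succ_self n, this⟩
  | pair cf cg ihf ihg =>
    intro n a ha
    simp only [evalo] at ha ⊢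
    rw [mem_pair_iff] at ha
    obtain ⟨u, hu, v, hv, rfl⟩ := ha
    obtain ⟨m₁, hm₁⟩ := ihf _ _ hu
    obtain ⟨m₂, hm₂⟩ := ihg _ _ hv
    refine ⟨max m₁ m₂, ?_⟩
    rw [mem_pair_iff]
    refine ⟨u, ?_, v, ?_, rfl⟩
    · exact evalo_mono (lu_mono (res_prefix (le_max_left _ _))) _ _ _ hm₁
    · exact evalo_mono (lu_mono (res_prefix (le_max_right _ _))) _ _ _ hm₂
  | comp cf cg ihf ihg =>
    intro n a ha
    simp only [evalo, Part.bind_eq_bind, Part.mem_bind_iff] at ha ⊢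
    replace ha := Part.mem_bind_iff.1 ha
    suffices hs : ∃ m, ∃ u ∈ evalo (lu (res A m)) cg n, a ∈ evalo (lu (res A m)) cf u from
      let ⟨m, hm⟩ := hs; ⟨m, Part.mem_bind_iff.2 hm⟩
    obtain ⟨u, hu, hau⟩ := ha
    obtain ⟨m₁, hm₁⟩ := ihg _ _ hu
    obtain ⟨m₂, hm₂⟩ := ihf _ _ hau
    refine ⟨max m₁ m₂, u, ?_, ?_⟩
    · exact evalo_mono (lu_mono (res_prefix (le_max_left _ _))) _ _ _ hm₁
    · exact evalo_mono (lu_mono (res_prefix (le_max_right _ _))) _ _ _ hm₂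
  | prec cf cg ihf ihg =>
    intro n a ha
    rw [← Nat.pair_unpair n] at ha ⊢
    generalize n.unpair.1 = x at ha ⊢
    generalize n.unpair.2 = k at ha ⊢
    induction k generalizing a with
    | zero =>
      rw [evalo_prec_zero] at ha
      obtain ⟨m, hm⟩ := ihf _ _ ha
      exact ⟨m, by rw [evalo_prec_zero]; exact hm⟩
    | succ k ihk =>
      rw [evalo_prec_succ, Part.mem_bind_iff] at ha
      obtain ⟨i, hi, hai⟩ := ha
      obtain ⟨m₁, hm₁⟩ := ihk _ hi
      obtain ⟨m₂, hm₂⟩ := ihg _ _ hai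
      refine ⟨max m₁ m₂, ?_⟩
      rw [evalo_prec_succ, Part.mem_bind_iff]
      refine ⟨i, ?_, ?_⟩
      · exact evalo_mono (lu_mono (res_prefix (le_max_left _ _))) _ _ _ hm₁
      · exact evalo_mono (lu_mono (res_prefix (le_max_right _ _))) _ _ _ hm₂
  | rfind cf ihf =>
    intro n a ha
    simp only [evalo] at ha ⊢
    erw [Nat.mem_rfind] at ha
    obtain ⟨h1, h2⟩ := ha
    have key : ∀ k, k ≤ a → ∃ m, ∃ v, v ∈ evalo (lu (res A m)) cf (Nat.pair n k) ∧
        (decide (v = 0)) = (if k = a then true else false) := by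
      intro k hk
      rcases eq_or_lt_of_le hk with rfl | hk
      · rw [mem_rfb] at h1
        obtain ⟨v, hv, hv0⟩ := h1
        obtain ⟨m, hm⟩ := ihf _ _ hv
        exact ⟨m, v, hm, by simp [hv0]⟩
      · have := h2 hk
        rw [mem_rfb] at this
        obtain ⟨v, hv, hv0⟩ := this
        obtain ⟨m, hm⟩ := ihf _ _ hv
        exact ⟨m, v, hm, by simp [hv0, Nat.ne_of_lt hk]⟩
    choose mf vf hvf hvf0 using key
    have hex : ∃ M, ∀ k (hk : k ≤ a), mf k hk ≤ M := by
      refine ⟨(Finset.range (a + 1)).sup fun k => if hk : k ≤ a then mf k hk else 0, ?_⟩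
      intro k hk
      have hmem : k ∈ Finset.range (a + 1) := Finset.mem_range.2 (Nat.lt_succ_of_le hk)
      have := Finset.le_sup (f := fun k => if hk : k ≤ a then mf k hk else 0) hmem
      simpa [hk] using this
    obtain ⟨M, hM⟩ := hex
    refine ⟨M, ?_⟩
    erw [Nat.mem_rfind]
    constructor
    · rw [mem_rfb]
      refine ⟨vf a le_rfl, ?_, by simpa using hvf0 a le_rfl⟩
      exact evalo_mono (lu_mono (res_prefix (hM a le_rfl))) _ _ _ (hvf a le_rfl)
    · intro k hk
      rw [mem_rfb]
      refine ⟨vf k hk.le, ?_, by simpa [Nat.ne_of_lt hk] using hvf0 k hk.le⟩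
      exact evalo_mono (lu_mono (res_prefix (hM k hk.le))) _ _ _ (hvf k hk.le)

/-! ### Part C: translation to plain codes, step-indexed halting predicate -/

open Nat.Partrec (Code)
open Nat.Partrec.Code

/-- The uncurried finite-lookup function. -/
def luN : ℕ →. ℕ := fun p =>
  Part.ofOption (((Encodable.decode (α := List Bool) p.unpair.1).getD []).map Bool.toNat)[p.unpair.2]?

theorem luN_partrec : Nat.Partrec luN := by
  have h1 : Primrec fun p : ℕ =>
      (((Encodable.decode (α := List Bool) p.unpair.1).getD []).map Bool.toNat)[p.unpair.2]? := by
    have hdec : Primrec fun p : ℕ => (Encodable.decode (α := List Bool) p.unpair.1).getD [] :=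
      Primrec.option_getD.comp (Primrec.decode.comp (Primrec.fst.comp Primrec.unpair))
        (Primrec.const [])
    have hlist : Primrec fun p : ℕ => ((Encodable.decode (α := List Bool) p.unpair.1).getD []).map Bool.toNat :=
      Primrec.list_map hdec ((Primrec.dom_bool Bool.toNat).comp Primrec.snd).to₂
    exact Primrec.list_getElem?.comp hlist (Primrec.snd.comp Primrec.unpair)
  have h2 : Partrec luN := by
    have := h1.to_comp.ofOption
    exact this
  exact Partrec.nat_iff.1 h2

/-- A plain code for `luN`. -/
noncomputable def lucode : Code := (Nat.Partrec.Code.exists_code.1 luN_partrec).choose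

theorem eval_lucode : eval lucode = luN := (Nat.Partrec.Code.exists_code.1 luN_partrec).choose_spec

/-- A plain code computing the finite-lookup oracle `lu σ`. -/
noncomputable def lookupC (σ : List Bool) : Code := lucode.curry (Encodable.encode σ)

theorem eval_lookupC (σ : List Bool) (q : ℕ) : eval (lookupC σ) q = lu σ q := by
  rw [lookupC, eval_curry, eval_lucode]
  simp [luN, lu, Nat.unpair_pair, Encodable.encodek]

theorem lookupC_prim : Primrec lookupC :=
  primrec₂_curry.comp (Primrec.const lucode) Primrec.encode

/-- Translation of an oracle code into a plain code with the oracle replaced by the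
finite lookup `σ`. -/
noncomputable def tr (c : Codeo) (σ : List Bool) : Code :=
  match c with
  | .zero => Code.zero
  | .succ => Code.succ
  | .left => Code.left
  | .right => Code.right
  | .oracle => lookupC σ
  | .pair cf cg => Code.pair (tr cf σ) (tr cg σ)
  | .comp cf cg => Code.comp (tr cf σ) (tr cg σ)
  | .prec cf cg => Code.prec (tr cf σ) (tr cg σ)
  | .rfind cf => Code.comp (Code.rfind' (tr cf σ)) (Code.pair Code.id Code.zero)

theorem eval_tr (c : Codeo) (σ : List Bool) : eval (tr c σ) = evalo (lu σ) c := by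
  induction c with
  | zero => rfl
  | succ => rfl
  | left => rfl
  | right => rfl
  | oracle => funext q; exact eval_lookupC σ q
  | pair cf cg ihf ihg => simp [tr, eval, evalo, ihf, ihg]; rfl
  | comp cf cg ihf ihg => simp [tr, eval, evalo, ihf, ihg]; rfl
  | prec cf cg ihf ihg => simp [tr, eval, evalo, ihf, ihg]; rfl
  | rfind cf ihf =>
    simp only [tr]
    simp [eval, ihf, Seq.seq, pure, PFun.pure, Part.map_id']
    rfl

theorem tr_prim (c : Codeo) : Primrec (tr c) := by
  induction c with
  | zero => exact Primrec.const _
  | succ => exact Primrec.const _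
  | left => exact Primrec.const _
  | right => exact Primrec.const _
  | oracle => exact lookupC_prim
  | pair cf cg ihf ihg => exact primrec₂_pair.comp ihf ihg
  | comp cf cg ihf ihg => exact primrec₂_comp.comp ihf ihg
  | prec cf cg ihf ihg => exact primrec₂_prec.comp ihf ihg
  | rfind cf ihf => exact primrec₂_comp.comp (primrec_rfind'.comp ihf) (Primrec.const _)

/-- A primitive recursive version of `take`. -/
def pre (σ : List Bool) (i : ℕ) : List Bool := (List.range i).map fun j => σ.getD j false

theorem pre_eq_take {σ : List Bool} {i : ℕ} (h : i ≤ σ.length) : pre σ i = σ.take i := by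
  apply List.ext_getElem
  · simp [pre]; omega
  · intro j h1 h2
    simp only [pre, List.length_map, List.length_range] at h1
    simp only [pre, List.getElem_map, List.getElem_range, List.getElem_take]
    exact List.getD_eq_getElem σ false (lt_of_lt_of_le h1 h)

theorem pre_prim : Primrec₂ pre :=
  Primrec.list_map (Primrec.list_range.comp Primrec.snd)
    (((Primrec.list_getD false).comp (Primrec.fst.comp Primrec.fst) Primrec.snd).to₂)

/-- The approximated value of an oracle computation on prefixes of `σ`
within `σ.length` steps. -/
noncomputable def hval (c : Codeo) (σ : List Bool) (n : ℕ) : Option ℕ :=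
  (List.range (σ.length + 1)).foldr
    (fun i acc => (evaln σ.length (tr c (pre σ i)) n).orElse fun _ => acc) none

/-- `hb c σ n = true` iff the oracle computation converges on (a prefix of, within the
length of) `σ`. -/
noncomputable def hb (c : Codeo) (σ : List Bool) (n : ℕ) : Bool := (hval c σ n).isSome

theorem foldr_orElse_eq_some {f : ℕ → Option ℕ} :
    ∀ {l : List ℕ} {v : ℕ},
      l.foldr (fun i acc => (f i).orElse fun _ => acc) none = some v → ∃ i ∈ l, f i = some v := by
  intro l
  induction l with
  | nil => intro v h; simp at h
  | cons i l ih =>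
    intro v h
    simp only [List.foldr_cons] at h
    cases hf : f i with
    | some w =>
      rw [hf] at h
      simp [Option.orElse] at h
      exact ⟨i, by simp, by rw [hf, h]⟩
    | none =>
      rw [hf] at h
      simp [Option.orElse] at h
      obtain ⟨j, hj, hjv⟩ := ih h
      exact ⟨j, by simp [hj], hjv⟩

theorem foldr_orElse_isSome {f : ℕ → Option ℕ} :
    ∀ {l : List ℕ} {i : ℕ}, i ∈ l → (f i).isSome →
      (l.foldr (fun i acc => (f i).orElse fun _ => acc) none).isSome := by
  intro l
  induction l with
  | nil => intro i hi; simp at hi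
  | cons j l ih =>
    intro i hi hs
    simp only [List.foldr_cons]
    cases hf : f j with
    | some w => simp [Option.orElse]
    | none =>
      simp only [Option.orElse, Option.orElse_none]
      rcases List.mem_cons.1 hi with rfl | hi'
      · rw [hf] at hs; simp at hs
      · exact ih hi' hs

theorem hval_sound {c : Codeo} {σ : List Bool} {n v : ℕ} (h : hval c σ n = some v) :
    v ∈ evalo (lu σ) c n := by
  obtain ⟨i, hi, hf⟩ := foldr_orElse_eq_some h
  have hi' : i ≤ σ.length := Nat.lt_succ_iff.1 (List.mem_range.1 hi)
  have hs : v ∈ evaln σ.length (tr c (pre σ i)) n := by rw [Option.mem_def, hf]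
  have := evaln_sound hs
  rw [eval_tr] at this
  refine evalo_mono (lu_mono ?_) _ _ _ this
  rw [pre_eq_take hi']
  exact List.take_prefix i σ

theorem hb_mono {c : Codeo} {n : ℕ} {σ τ : List Bool} (hp : σ <+: τ) (h : hb c σ n = true) :
    hb c τ n = true := by
  rw [hb, Option.isSome_iff_exists] at h
  obtain ⟨v, hv⟩ := h
  obtain ⟨i, hi, hf⟩ := foldr_orElse_eq_some hv
  have hi' : i ≤ σ.length := Nat.lt_succ_iff.1 (List.mem_range.1 hi)
  have hpre : pre σ i = pre τ i := by
    rw [pre_eq_take hi', pre_eq_take (le_trans hi' hp.length_le)]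
    refine List.IsPrefix.eq_of_length (hp.take i) ?_
    have hlen := hp.length_le
    simp only [List.length_take]
    omega
  have hs : v ∈ evaln τ.length (tr c (pre τ i)) n := by
    rw [← hpre]
    exact evaln_mono hp.length_le (by rw [Option.mem_def, hf])
  have hlen := hp.length_le
  rw [hb]
  refine foldr_orElse_isSome (i := i) (List.mem_range.2 ?_) ?_
  · omega
  · rw [Option.mem_def] at hs
    rw [hs]; rfl

theorem res_take {A : ℕ → Bool} {m L : ℕ} (h : m ≤ L) : (res A L).take m = res A m := by
  rw [res, res, ← List.map_take, List.take_range]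
  rw [min_eq_left h]

theorem hb_complete {c : Codeo} {n v : ℕ} {A : ℕ → Bool}
    (h : v ∈ evalo ↑(boolOracle A) c n) : ∃ L, hb c (res A L) n = true := by
  obtain ⟨m, hm⟩ := evalo_use _ _ _ h
  rw [← eval_tr] at hm
  obtain ⟨k, hk⟩ := evaln_complete.1 hm
  refine ⟨max m k, ?_⟩
  rw [hb]
  refine foldr_orElse_isSome (i := m) (List.mem_range.2 ?_) ?_
  · rw [res_length]; omega
  · have hpre : pre (res A (max m k)) m = res A m := by
      rw [pre_eq_take (by rw [res_length]; exact le_max_left _ _)]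
      exact res_take (le_max_left _ _)
    rw [hpre, res_length]
    have := evaln_mono (le_max_right m k) hk
    rw [Option.mem_def] at this
    rw [this]; rfl

theorem hval_res_correct {c : Codeo} {n v : ℕ} {A : ℕ → Bool} {L : ℕ}
    (h : hval c (res A L) n = some v) : v ∈ evalo ↑(boolOracle A) c n :=
  evalo_mono lu_res_le_oracle _ _ _ (hval_sound h)

theorem hval_prim (c : Codeo) : Primrec₂ (hval c) := by
  have hk : Primrec fun p : (List Bool × ℕ) × ℕ × Option ℕ => p.1.1.length :=
    Primrec.list_length.comp (Primrec.fst.comp Primrec.fst)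
  have hc : Primrec fun p : (List Bool × ℕ) × ℕ × Option ℕ => tr c (pre p.1.1 p.2.1) :=
    (tr_prim c).comp (pre_prim.comp (Primrec.fst.comp Primrec.fst) (Primrec.fst.comp Primrec.snd))
  have hn : Primrec fun p : (List Bool × ℕ) × ℕ × Option ℕ => p.1.2 :=
    Primrec.snd.comp Primrec.fst
  have heval : Primrec fun p : (List Bool × ℕ) × ℕ × Option ℕ =>
      evaln p.1.1.length (tr c (pre p.1.1 p.2.1)) p.1.2 :=
    primrec_evaln.comp ((hk.pair hc).pair hn)
  have horelse : Primrec fun p : (List Bool × ℕ) × ℕ × Option ℕ =>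
      (evaln p.1.1.length (tr c (pre p.1.1 p.2.1)) p.1.2).orElse fun _ => p.2.2 := by
    have := Primrec.option_casesOn heval (Primrec.snd.comp Primrec.snd)
      (Primrec.option_some.comp Primrec.snd).to₂
    refine this.of_eq fun p => ?_
    cases evaln p.1.1.length (tr c (pre p.1.1 p.2.1)) p.1.2 <;> rfl
  have := Primrec.list_foldr
    (f := fun p : List Bool × ℕ => List.range (p.1.length + 1))
    (g := fun _ : List Bool × ℕ => (none : Option ℕ))
    (h := fun p q => (evaln p.1.length (tr c (pre p.1 q.1)) p.2).orElse fun _ => q.2)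
    (Primrec.list_range.comp (Primrec.succ.comp (Primrec.list_length.comp Primrec.fst)))
    (Primrec.const none) horelse.to₂
  exact this.to₂

theorem hb_prim (c : Codeo) : Primrec₂ (hb c) :=
  (Primrec.option_isSome.comp (hval_prim c)).to₂

/-! ### Part D: trees, compactness, finite enumeration of strings -/

/-- Downward closure of a set of strings. -/
def DC (T : List Bool → Bool) : Prop := ∀ σ τ : List Bool, σ <+: τ → T τ = true → T σ = true

/-- The tree has strings of every length. -/
def Ext (T : List Bool → Bool) : Prop := ∀ n, ∃ σ : List Bool, σ.length = n ∧ T σ = true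

/-- Infinite paths through a tree. -/
def paths (T : List Bool → Bool) : Set (ℕ → Bool) := {A | ∀ n, T (res A n) = true}

theorem res_eq_of_eq_below {A B : ℕ → Bool} {n : ℕ} (h : ∀ i < n, B i = A i) :
    res B n = res A n := by
  simp only [res]
  apply List.map_congr_left
  intro i hi
  exact h i (List.mem_range.1 hi)

theorem level_open (P : List Bool → Prop) (n : ℕ) :
    IsOpen {A : ℕ → Bool | P (res A n)} := by
  rw [isOpen_iff_mem_nhds]
  intro A hA
  have hcyl : (⋂ i ∈ Finset.range n, {B : ℕ → Bool | B i = A i}) ∈ nhds A := by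
    refine (Filter.biInter_finset_mem _).2 fun i _ => ?_
    have hopen : IsOpen {B : ℕ → Bool | B i = A i} := by
      have := IsOpen.preimage (continuous_apply (A := fun _ : ℕ => Bool) i)
        (isOpen_discrete {A i})
      exact this
    exact hopen.mem_nhds rfl
  refine Filter.mem_of_superset hcyl ?_
  intro B hB
  simp only [Set.mem_iInter, Set.mem_setOf_eq, Finset.mem_range] at hB
  have : res B n = res A n := res_eq_of_eq_below fun i hi => hB i hi
  simp only [Set.mem_setOf_eq, this]
  exact hA

theorem level_closed (T : List Bool → Bool) (n : ℕ) :
    IsClosed {A : ℕ → Bool | T (res A n) = true} := by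
  rw [← isOpen_compl_iff]
  have : {A : ℕ → Bool | T (res A n) = true}ᶜ = {A : ℕ → Bool | ¬(T (res A n) = true)} := rfl
  rw [this]
  exact level_open (fun σ => ¬(T σ = true)) n

theorem paths_closed (T : List Bool → Bool) : IsClosed (paths T) := by
  have : paths T = ⋂ n, {A : ℕ → Bool | T (res A n) = true} := by
    ext A; simp [paths, Set.mem_iInter]
  rw [this]
  exact isClosed_iInter fun n => level_closed T n

theorem level_nonempty {T : List Bool → Bool} (hext : Ext T) (n : ℕ) :
    {A : ℕ → Bool | T (res A n) = true}.Nonempty := by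
  obtain ⟨σ, hlen, hσ⟩ := hext n
  refine ⟨fun i => σ.getD i false, ?_⟩
  have : res (fun i => σ.getD i false) n = σ := by
    apply List.ext_getElem
    · simp [res, hlen]
    · intro j h1 h2
      simp only [res, List.getElem_map, List.getElem_range]
      exact List.getD_eq_getElem σ false h2
  simp only [Set.mem_setOf_eq, this]
  exact hσ

theorem paths_nonempty {T : List Bool → Bool} (hdc : DC T) (hext : Ext T) :
    (paths T).Nonempty := by
  have key := IsCompact.nonempty_iInter_of_sequence_nonempty_isCompact_isClosed
    (fun n => {A : ℕ → Bool | T (res A n) = true})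
    (fun n A hA => hdc _ _ (res_prefix (Nat.le_succ n)) hA)
    (fun n => level_nonempty hext n)
    ((level_closed T 0).isCompact)
    (fun n => level_closed T n)
  obtain ⟨A, hA⟩ := key
  exact ⟨A, fun n => Set.mem_iInter.1 hA n⟩

/-- The `e`-th binary string of length `l`. -/
def bstr (l e : ℕ) : List Bool := (List.range l).map fun j => e.testBit j

theorem bstr_length {l e : ℕ} : (bstr l e).length = l := by simp [bstr]

theorem pow_prim : Primrec₂ fun a b : ℕ => a ^ b := by
  have h : Primrec fun p : ℕ × ℕ => Nat.unpaired (· ^ ·) (Nat.pair p.1 p.2) :=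
    (Primrec.nat_iff.2 Nat.Primrec.pow).comp Primrec₂.natPair
  have h2 : Primrec fun p : ℕ × ℕ => p.1 ^ p.2 := h.of_eq fun p => by simp [Nat.unpaired]
  exact h2.to₂

theorem testBit_prim : Primrec₂ Nat.testBit := by
  have h : Primrec₂ fun e j : ℕ => decide (e / 2 ^ j % 2 = 1) := by
    have hdiv : Primrec₂ fun e j : ℕ => e / 2 ^ j :=
      (Primrec.nat_div.comp Primrec.fst (pow_prim.comp (Primrec.const 2) Primrec.snd)).to₂
    have hmod : Primrec₂ fun e j : ℕ => e / 2 ^ j % 2 :=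
      (Primrec.nat_mod.comp hdiv (Primrec.const 2)).to₂
    exact (Primrec.eq.decide.comp hmod (Primrec.const 1)).to₂
  exact h.of_eq fun e j => (Nat.testBit_eq_decide_div_mod_eq).symm

theorem bstr_prim : Primrec₂ bstr :=
  Primrec.list_map (Primrec.list_range.comp Primrec.fst)
    ((testBit_prim.comp (Primrec.snd.comp Primrec.fst) Primrec.snd).to₂)

theorem bstr_complete : ∀ τ : List Bool, ∃ e < 2 ^ τ.length, bstr τ.length e = τ := by
  intro τ
  induction τ with
  | nil => exact ⟨0, by norm_num, rfl⟩
  | cons b t ih =>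
    obtain ⟨e', he', heq⟩ := ih
    refine ⟨b.toNat + 2 * e', ?_, ?_⟩
    · have : b.toNat ≤ 1 := Bool.toNat_le b
      simp only [List.length_cons, pow_succ]
      omega
    · have hbit0 : (b.toNat + 2 * e').testBit 0 = b := by
        rw [Nat.testBit_zero]
        cases b <;> simp <;> omega
      have hdiv : (b.toNat + 2 * e') / 2 = e' := by cases b <;> simp <;> omega
      rw [bstr, List.length_cons, List.range_succ_eq_map, List.map_cons, hbit0]
      congr 1
      rw [List.map_map]
      have hmc : List.map ((fun j => (b.toNat + 2 * e').testBit j) ∘ Nat.succ)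
          (List.range t.length) = bstr t.length e' := by
        rw [bstr]
        apply List.map_congr_left
        intro j _
        simp only [Function.comp_apply]
        rw [Nat.testBit_succ, hdiv]
      rw [hmc, heq]

/-- Bounded universal quantification, computably. -/
def allB {α : Type} (bound : α → ℕ) (P : α → ℕ → Bool) (a : α) : Bool :=
  Nat.rec true (fun y IH => IH && P a y) (bound a)

theorem allB_iff {α : Type} {bound : α → ℕ} {P : α → ℕ → Bool} {a : α} :
    allB bound P a = true ↔ ∀ e < bound a, P a e = true := by
  rw [allB]
  induction bound a with
  | zero => simp
  | succ k ih =>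
    simp only [Bool.and_eq_true, ih]
    constructor
    · rintro ⟨h1, h2⟩ e he
      rcases Nat.lt_succ_iff_lt_or_eq.1 he with h | rfl
      · exact h1 e h
      · exact h2
    · intro h
      exact ⟨fun e he => h e (Nat.lt_succ_of_lt he), h k (Nat.lt_succ_self k)⟩

theorem allB_computable {α : Type} [Primcodable α] {bound : α → ℕ} {P : α → ℕ → Bool}
    (hb : Computable bound) (hP : Computable₂ P) : Computable (allB bound P) := by
  have hand : Computable₂ fun x y : Bool => x && y := (Primrec.dom_bool₂ _).to_comp
  have hh : Computable₂ fun (a : α) (p : ℕ × Bool) => p.2 && P a p.1 :=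
    (hand.comp (Computable.snd.comp Computable.snd)
      (hP.comp Computable.fst (Computable.fst.comp Computable.snd))).to₂
  exact (Computable.nat_rec hb (Computable.const true) hh).of_eq fun a => rfl

/-- Bounded maximum, computably. -/
def maxB {α : Type} (bound : α → ℕ) (V : α → ℕ → ℕ) (a : α) : ℕ :=
  Nat.rec 0 (fun y IH => max IH (V a y)) (bound a)

theorem maxB_ge {α : Type} {bound : α → ℕ} {V : α → ℕ → ℕ} {a : α} {e : ℕ}
    (he : e < bound a) : V a e ≤ maxB bound V a := by
  rw [maxB]
  suffices h : ∀ k, e < k → V a e ≤ (Nat.rec 0 (fun y IH => max IH (V a y)) k : ℕ) from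
    h _ he
  intro k
  induction k with
  | zero => intro h; exact absurd h (Nat.not_lt_zero e)
  | succ k ih =>
    intro h
    rcases Nat.lt_succ_iff_lt_or_eq.1 h with h' | rfl
    · exact le_trans (ih h') (le_max_left _ _)
    · exact le_max_right _ _

theorem maxB_computable {α : Type} [Primcodable α] {bound : α → ℕ} {V : α → ℕ → ℕ}
    (hb : Computable bound) (hV : Computable₂ V) : Computable (maxB bound V) := by
  have hmax : Computable₂ fun x y : ℕ => max x y := Primrec.nat_max.to_comp
  have hh : Computable₂ fun (a : α) (p : ℕ × ℕ) => max p.2 (V a p.1) :=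
    (hmax.comp (Computable.snd.comp Computable.snd)
      (hV.comp Computable.fst (Computable.fst.comp Computable.snd))).to₂
  exact (Computable.nat_rec hb (Computable.const 0) hh).of_eq fun a => rfl

/-! ### Part E: the forcing step and the main construction -/

/-- The tree `T` decides the domination requirement for the oracle code `c`. -/
def Good (c : Codeo) (T : List Bool → Bool) : Prop :=
  ∀ A : ℕ → Bool, A ∈ paths T → ∀ f : ℕ → ℕ,
    (∀ n, f n ∈ evalo ↑(boolOracle A) c n) →
    ∃ g : ℕ → ℕ, Computable g ∧ ∀ n, f n ≤ g n

theorem step {T : List Bool → Bool} (hc : Computable T) (hdc : DC T) (hext : Ext T)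
    (c : Codeo) :
    ∃ T' : List Bool → Bool, (∀ σ, T' σ = true → T σ = true) ∧
      Computable T' ∧ DC T' ∧ Ext T' ∧ Good c T' := by
  by_cases hcase : ∃ n, Ext fun σ => T σ && !(hb c σ n)
  · -- divergence can be forced
    obtain ⟨n, hn⟩ := hcase
    refine ⟨fun σ => T σ && !(hb c σ n), ?_, ?_, ?_, hn, ?_⟩
    · intro σ h
      simp only [Bool.and_eq_true] at h
      exact h.1
    · have h1 : Computable fun σ => hb c σ n :=
        ((hb_prim c).comp Primrec.id (Primrec.const n)).to_comp
      have hand : Computable₂ fun x y : Bool => x && !y := (Primrec.dom_bool₂ _).to_comp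
      exact hand.comp hc h1
    · intro σ τ hp hτ
      rw [Bool.and_eq_true] at hτ ⊢
      obtain ⟨h1, h2⟩ := hτ
      refine ⟨hdc σ τ hp h1, ?_⟩
      cases hσ : hb c σ n with
      | false => rfl
      | true => rw [hb_mono hp hσ] at h2; simp at h2
    · intro A hA f hf
      exfalso
      obtain ⟨L, hL⟩ := hb_complete (hf n)
      have hmem := hA L
      rw [Bool.and_eq_true, hL] at hmem
      simp at hmem
  · -- totality is forced; build a computable dominating function
    push_neg at hcase
    refine ⟨T, fun _ h => h, hc, hdc, hext, ?_⟩
    have hglobal : ∀ n, ∃ l, ∀ σ : List Bool, σ.length = l → T σ = true →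
        hb c σ n = true := by
      intro n
      have hne := hcase n
      rw [Ext] at hne
      push_neg at hne
      obtain ⟨l, hl⟩ := hne
      refine ⟨l, fun σ hσl hσT => ?_⟩
      by_contra hbf
      refine hl σ hσl ?_
      rw [Bool.and_eq_true, hσT]
      simp only [Bool.not_eq_true] at hbf
      rw [hbf]
      exact ⟨rfl, rfl⟩
    intro A hA f hf
    classical
    -- computable ingredients
    set P : ℕ × ℕ → ℕ → Bool := fun p e => !(T (bstr p.2 e)) || hb c (bstr p.2 e) p.1 with hP
    set V : ℕ × ℕ → ℕ → ℕ :=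
      fun p e => cond (T (bstr p.2 e)) ((hval c (bstr p.2 e) p.1).getD 0) 0 with hV
    set bound : ℕ × ℕ → ℕ := fun p => 2 ^ p.2 with hbound
    have hbstr : Primrec fun q : (ℕ × ℕ) × ℕ => bstr q.1.2 q.2 :=
      bstr_prim.comp (Primrec.snd.comp Primrec.fst) Primrec.snd
    have hTb : Computable fun q : (ℕ × ℕ) × ℕ => T (bstr q.1.2 q.2) :=
      hc.comp hbstr.to_comp
    have hPc : Computable₂ P := by
      have hhb : Computable fun q : (ℕ × ℕ) × ℕ => hb c (bstr q.1.2 q.2) q.1.1 :=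
        ((hb_prim c).comp hbstr (Primrec.fst.comp Primrec.fst)).to_comp
      have hor : Computable₂ fun x y : Bool => !x || y := (Primrec.dom_bool₂ _).to_comp
      exact (hor.comp hTb hhb).to₂
    have hVc : Computable₂ V := by
      have hgd : Computable fun q : (ℕ × ℕ) × ℕ => (hval c (bstr q.1.2 q.2) q.1.1).getD 0 :=
        (Primrec.option_getD.comp
          ((hval_prim c).comp hbstr (Primrec.fst.comp Primrec.fst))
          (Primrec.const 0)).to_comp
      exact (Computable.cond hTb hgd (Computable.const 0)).to₂
    have hboundc : Computable bound :=
      (pow_prim.comp (Primrec.const 2) Primrec.snd).to_comp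
    have hgoodc : Computable (allB bound P) := allB_computable hboundc hPc
    have hmaxc : Computable (maxB bound V) := maxB_computable hboundc hVc
    set F : ℕ →. ℕ := fun n => (Nat.rfind fun l => Part.some (allB bound P (n, l))).bind
      fun l => Part.some (maxB bound V (n, l)) with hF
    have hFpart : Partrec F := by
      refine Partrec.bind ?_ ?_
      · refine Partrec.rfind ?_
        have hcmp : Computable fun q : ℕ × ℕ => allB bound P (q.1, q.2) :=
          hgoodc.comp (Computable.fst.pair Computable.snd)
        exact hcmp.partrec.to₂
      · have hcmp : Computable fun q : ℕ × ℕ => maxB bound V (q.1, q.2) :=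
          hmaxc.comp (Computable.fst.pair Computable.snd)
        exact hcmp.partrec.to₂
    have htot : ∀ n, ∃ l, allB bound P (n, l) = true := by
      intro n
      obtain ⟨l, hl⟩ := hglobal n
      refine ⟨l, allB_iff.2 fun e _ => ?_⟩
      have hlen : (bstr l e).length = l := bstr_length
      cases hT : T (bstr l e) with
      | false => simp [hP, hT]
      | true => simp [hP, hT, hl (bstr l e) hlen hT]
    have hFtot : ∀ n, ∃ v, v ∈ F n ∧ ∃ l,
        allB bound P (n, l) = true ∧ v = maxB bound V (n, l) := by
      intro n
      obtain ⟨l₀, hl₀⟩ := htot n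
      obtain ⟨l, hlmem, -⟩ := Nat.rfind_min' (p := fun l => allB bound P (n, l)) hl₀
      refine ⟨maxB bound V (n, l), ?_, l, ?_, rfl⟩
      · rw [hF]
        rw [Part.mem_bind_iff]
        exact ⟨l, hlmem, Part.mem_some _⟩
      · have := Nat.rfind_spec hlmem
        simpa using this
    set g : ℕ → ℕ := fun n => (hFtot n).choose with hg
    refine ⟨g, ?_, ?_⟩
    · exact Partrec.of_eq_tot hFpart fun n => (hFtot n).choose_spec.1
    · intro n
      obtain ⟨-, l, hgood, hgval⟩ := (hFtot n).choose_spec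
      -- A's prefix of length l is in T
      have hAT : T (res A l) = true := hA l
      have hlen : (res A l).length = l := res_length
      obtain ⟨e, he, hbe⟩ := by
        have := bstr_complete (res A l)
        rwa [hlen] at this
      have hPe : P (n, l) e = true := allB_iff.1 hgood e he
      rw [hP] at hPe
      simp only [hbe, hAT, Bool.not_true, Bool.false_or] at hPe
      -- extract the value
      rw [hb, Option.isSome_iff_exists] at hPe
      obtain ⟨v, hv⟩ := hPe
      have hvf : v = f n := Part.mem_unique (hval_res_correct hv) (hf n)
      have hVe : V (n, l) e = f n := by
        rw [hV]
        simp only [hbe, hAT, cond_true, hv, Option.getD_some, hvf]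
      calc f n = V (n, l) e := hVe.symm
        _ ≤ maxB bound V (n, l) := maxB_ge (by simpa [hbound] using he)
        _ = g n := by rw [hg]; exact hgval.symm

end HIF

/-- Every nonempty `Π⁰₁` class contains a member of hyperimmune-free degree. -/
theorem Pi01_class_has_member_of_hyperimmune_free_degree (P : Set (ℕ → Bool))
    (hP : IsPi01Class P) (hne : P.Nonempty) :
    ∃ A ∈ P, ∀ f : ℕ → ℕ,
      OracleRecursiveIn (boolOracle A) (fun n => Part.some (f n)) →
      ∃ g : ℕ → ℕ, Computable g ∧ ∀ n, f n ≤ g n := by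
  classical
  obtain ⟨T, hTc, hTdc, hTmem⟩ := hP
  obtain ⟨A₀, hA₀⟩ := hne
  have hText : HIF.Ext T := fun n => ⟨HIF.res A₀ n, HIF.res_length, (hTmem A₀).1 hA₀ n⟩
  have hTdc' : HIF.DC T := hTdc
  -- iterate the forcing step along an enumeration of all oracle codes
  have hstep : ∀ (q : {T' : List Bool → Bool // Computable T' ∧ HIF.DC T' ∧ HIF.Ext T'})
      (c : HIF.Codeo),
      ∃ q' : {T' : List Bool → Bool // Computable T' ∧ HIF.DC T' ∧ HIF.Ext T'},
        (∀ σ, q'.1 σ = true → q.1 σ = true) ∧ HIF.Good c q'.1 := by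
    rintro ⟨T', h1, h2, h3⟩ c
    obtain ⟨T'', hsub, hc', hdc', hext', hgood⟩ := HIF.step h1 h2 h3 c
    exact ⟨⟨T'', hc', hdc', hext'⟩, hsub, hgood⟩
  choose St hSt1 hSt2 using hstep
  let seq : ℕ → {T' : List Bool → Bool // Computable T' ∧ HIF.DC T' ∧ HIF.Ext T'} :=
    fun e => Nat.rec ⟨T, hTc, hTdc', hText⟩ (fun e' prev => St prev (HIF.decC e')) e
  have hnested : ∀ e, HIF.paths (seq (e + 1)).1 ⊆ HIF.paths (seq e).1 := by
    intro e A hA n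
    exact hSt1 (seq e) (HIF.decC e) _ (hA n)
  obtain ⟨A, hA⟩ := IsCompact.nonempty_iInter_of_sequence_nonempty_isCompact_isClosed
    (fun e => HIF.paths (seq e).1) hnested
    (fun e => HIF.paths_nonempty (seq e).2.2.1 (seq e).2.2.2)
    ((HIF.paths_closed _).isCompact) (fun e => HIF.paths_closed _)
  refine ⟨A, ?_, ?_⟩
  · exact (hTmem A).2 fun n => Set.mem_iInter.1 hA 0 n
  · intro f hf
    obtain ⟨c, hcode⟩ := HIF.exists_codeo hf
    have hfmem : ∀ n, f n ∈ HIF.evalo ↑(boolOracle A) c n := by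
      intro n
      rw [hcode]
      exact Part.mem_some _
    have hmem : A ∈ HIF.paths (St (seq (HIF.encC c)) (HIF.decC (HIF.encC c))).1 :=
      Set.mem_iInter.1 hA (HIF.encC c + 1)
    have hgood := hSt2 (seq (HIF.encC c)) (HIF.decC (HIF.encC c))
    have hfmem' : ∀ n, f n ∈ HIF.evalo ↑(boolOracle A) (HIF.decC (HIF.encC c)) n := by
      rw [HIF.decC_encC]
      exact hfmem
    exact hgood A hmem f hfmem'
end
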